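/- For every n ≥ 4 and every r with 1 ≤ r ≤ n−3, the arrangement K_{r,n} can be transformed into K_{r+1,n} in exactly 3r−2 LRE moves; that is, there exist g_1, …, g_{3r−2} ∈ G with K_{r,n} ∘ g_1 ∘ ⋯ ∘ g_{3r−2} = K_{r+1,n}. -/

import Mathlib

set_option maxHeartbeats 2000000 in
/-- For every `n ≥ 4` and `1 ≤ r ≤ n - 3`, the arrangement `K_{r,n}` can be transformed
into `K_{r+1,n}` in exactly `3r - 2` LRE moves.  Permutations of `{1,…,n}` are modelled as
`Equiv.Perm (Fin n)` with `i : Fin n` representing the 1-based index `(i : ℕ) + 1`: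
`σ` is the left-rotation (`σ(i) = i + 1` cyclically), `τ` is the transposition of the first
two positions, `Kr = K_{r,n}` sends `i ↦ n - r + i` for `1 ≤ i ≤ r` and `i ↦ n + 1 - i`
for `r < i ≤ n`, and `Kr1 = K_{r+1,n}`.  Applying a move multiplies on the right by an
element of `G = {σ, σ⁻¹, τ}` (note `(π * g) i = π (g i)`, i.e. `π ∘ g`). -/
theorem K_step_three_r_sub_two (n r : ℕ) (hn : 4 ≤ n) (hr1 : 1 ≤ r) (hr : r ≤ n - 3)
    (σ τ Kr Kr1 : Equiv.Perm (Fin n))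
    (hσ : ∀ i : Fin n, (σ i : ℕ) = ((i : ℕ) + 1) % n)
    (hτ : ∀ i : Fin n, (τ i : ℕ) =
      if (i : ℕ) = 0 then 1 else if (i : ℕ) = 1 then 0 else (i : ℕ))
    (hKr : ∀ i : Fin n, (Kr i : ℕ) =
      if (i : ℕ) < r then n - r + (i : ℕ) else n - 1 - (i : ℕ))
    (hKr1 : ∀ i : Fin n, (Kr1 i : ℕ) =
      if (i : ℕ) < r + 1 then n - (r + 1) + (i : ℕ) else n - 1 - (i : ℕ)) :
    ∃ gs : List (Equiv.Perm (Fin n)),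
      gs.length = 3 * r - 2 ∧
      (∀ g ∈ gs, g = σ ∨ g = σ⁻¹ ∨ g = τ) ∧
      Kr * gs.prod = Kr1 := by
  have hn0 : 0 < n := by omega
  -- formula for σ⁻¹
  have hσinv : ∀ i : Fin n, ((σ⁻¹ i : Fin n) : ℕ) =
      if (i : ℕ) = 0 then n - 1 else (i : ℕ) - 1 := by
    intro i
    have h1 := hσ (σ⁻¹ i)
    rw [show σ (σ⁻¹ i) = i from σ.apply_symm_apply i] at h1
    have h2 : ((σ⁻¹ i : Fin n) : ℕ) < n := (σ⁻¹ i).isLt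
    have h3 : (i : ℕ) < n := i.isLt
    rcases Nat.lt_or_ge (((σ⁻¹ i : Fin n) : ℕ) + 1) n with h | h
    · rw [Nat.mod_eq_of_lt h] at h1
      split_ifs <;> omega
    · have he : ((σ⁻¹ i : Fin n) : ℕ) + 1 = n := by omega
      rw [he, Nat.mod_self] at h1
      split_ifs <;> omega
  -- formula for τ * σ⁻¹
  have hv : ∀ i : Fin n, (((τ * σ⁻¹) i : Fin n) : ℕ) =
      if (i : ℕ) = 0 then n - 1
      else if (i : ℕ) = 1 then 1
      else if (i : ℕ) = 2 then 0
      else (i : ℕ) - 1 := by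
    intro i
    have h1 : (((τ * σ⁻¹) i : Fin n) : ℕ) = ((τ (σ⁻¹ i) : Fin n) : ℕ) := rfl
    rw [h1, hτ (σ⁻¹ i), hσinv i]
    have h3 : (i : ℕ) < n := i.isLt
    split_ifs <;> omega
  -- formula for (τ * σ⁻¹)^k
  have hpow : ∀ k : ℕ, k + 3 ≤ n → ∀ i : Fin n, ((((τ * σ⁻¹) ^ k) i : Fin n) : ℕ) =
      if (i : ℕ) = 1 then 1
      else if (i : ℕ) = 0 then (if k = 0 then 0 else n - k)
      else if (i : ℕ) = k + 1 then 0
      else if (i : ℕ) ≤ k then n - 1 - k + (i : ℕ)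
      else (i : ℕ) - k := by
    intro k
    induction k with
    | zero =>
      intro _ i
      have h3 : (i : ℕ) < n := i.isLt
      simp only [pow_zero, Equiv.Perm.one_apply]
      split_ifs <;> omega
    | succ k ih =>
      intro hk i
      have h3 : (i : ℕ) < n := i.isLt
      have hstep : (((τ * σ⁻¹) ^ (k + 1)) i : Fin n) =
          (((τ * σ⁻¹) ^ k) ((τ * σ⁻¹) i) : Fin n) := by
        rw [pow_succ, Equiv.Perm.mul_apply]
      have h1 := ih (by omega) ((τ * σ⁻¹) i)
      have h2 := hv i
      rw [hstep, h1]
      split_ifs at h2 ⊢ <;> first | contradiction | omega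
  -- formula for σ ^ m
  have hpowσ : ∀ m : ℕ, ∀ i : Fin n, (((σ ^ m) i : Fin n) : ℕ) = ((i : ℕ) + m) % n := by
    intro m
    induction m with
    | zero =>
      intro i
      simp only [pow_zero, Equiv.Perm.one_apply, Nat.add_zero]
      exact (Nat.mod_eq_of_lt i.isLt).symm
    | succ m ih =>
      intro i
      have hstep : (((σ ^ (m + 1)) i : Fin n) : ℕ) = (((σ ^ m) (σ i) : Fin n) : ℕ) := by
        rw [pow_succ, Equiv.Perm.mul_apply]
      rw [hstep, ih (σ i), hσ i, Nat.mod_add_mod]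
      congr 1
      omega
  -- auxiliary list facts
  have haux : ∀ m : ℕ,
      ((List.replicate m [τ, σ⁻¹]).flatten).length = 2 * m ∧
      ((List.replicate m [τ, σ⁻¹]).flatten).prod = (τ * σ⁻¹) ^ m ∧
      (∀ g ∈ (List.replicate m [τ, σ⁻¹]).flatten, g = τ ∨ g = σ⁻¹) := by
    intro m
    induction m with
    | zero => simp
    | succ m ih =>
      obtain ⟨hl, hp, hm⟩ := ih
      refine ⟨?_, ?_, ?_⟩
      · simp only [List.replicate_succ, List.flatten_cons, List.length_append, hl,
          List.length_cons, List.length_nil]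
        omega
      · rw [List.replicate_succ, List.flatten_cons, List.prod_append, hp, pow_succ']
        simp [mul_assoc]
      · intro g hg
        rw [List.replicate_succ, List.flatten_cons, List.mem_append] at hg
        rcases hg with hg | hg
        · simp only [List.mem_cons, List.mem_singleton] at hg
          rcases hg with h | h | h
          · left; exact h
          · right; exact h
          · exact absurd h List.not_mem_nil
        · exact hm g hg
  obtain ⟨hl, hp, hm⟩ := haux (r - 1)
  refine ⟨List.replicate (r - 1) σ ++ ((List.replicate (r - 1) [τ, σ⁻¹]).flatten ++ [τ]),
    ?_, ?_, ?_⟩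
  · simp only [List.length_append, List.length_replicate, hl, List.length_singleton]
    omega
  · intro g hg
    simp only [List.mem_append, List.mem_replicate, List.mem_singleton] at hg
    rcases hg with ⟨_, h⟩ | h | h
    · left; exact h
    · rcases hm g h with h' | h'
      · right; right; exact h'
      · right; left; exact h'
    · right; right; exact h
  · have hprod : (List.replicate (r - 1) σ ++
        ((List.replicate (r - 1) [τ, σ⁻¹]).flatten ++ [τ])).prod =
        σ ^ (r - 1) * ((τ * σ⁻¹) ^ (r - 1) * τ) := by
      rw [List.prod_append, List.prod_append, List.prod_replicate, hp,
        List.prod_singleton]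
    rw [hprod]
    apply Equiv.ext
    intro i
    apply Fin.val_injective
    have h3 : (i : ℕ) < n := i.isLt
    have hgoal : ((Kr * (σ ^ (r - 1) * ((τ * σ⁻¹) ^ (r - 1) * τ))) i : Fin n) =
        Kr ((σ ^ (r - 1)) (((τ * σ⁻¹) ^ (r - 1)) (τ i))) := rfl
    have hτi := hτ i
    have hbval := hpow (r - 1) (by omega) (τ i)
    have hblt : ((((τ * σ⁻¹) ^ (r - 1)) (τ i) : Fin n) : ℕ) < n := Fin.isLt _
    have hKrv := hKr ((σ ^ (r - 1)) (((τ * σ⁻¹) ^ (r - 1)) (τ i)))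
    rw [hpowσ (r - 1) (((τ * σ⁻¹) ^ (r - 1)) (τ i))] at hKrv
    rw [hgoal, hKrv, hKr1 i]
    generalize hB : ((((τ * σ⁻¹) ^ (r - 1)) (τ i) : Fin n) : ℕ) = B at hbval hblt ⊢
    generalize hA : ((τ i : Fin n) : ℕ) = A at hbval hτi
    rcases Nat.lt_or_ge (B + (r - 1)) n with hc | hc
    · rw [Nat.mod_eq_of_lt hc]
      split_ifs at hbval hτi ⊢ <;> omega
    · have h2 : B + (r - 1) - n < n := by omega
      have h1 : B + (r - 1) = (B + (r - 1) - n) + n := by omega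
      rw [h1, Nat.add_mod_right, Nat.mod_eq_of_lt h2]
      split_ifs at hbval hτi ⊢ <;> omega
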